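/- On the space M(Ω) of finite signed Borel measures on an uncountable Polish space Ω (e.g. Ω = ℝ), there exists a positive rank-one operator T and a weakly continuous positive operator S with 0 ≤ T ≤ S such that T is not weakly continuous. Hence the weakly continuous operators are not an order ideal in L(M(Ω)). -/

import Mathlib

open MeasureTheory Topology Filter
open scoped NNReal ENNReal BoundedContinuousFunction

noncomputable def sInt {Ω : Type*} [MeasurableSpace Ω] (μ : SignedMeasure Ω) (f : Ω → ℝ) : ℝ :=
  (∫ x, f x ∂μ.toJordanDecomposition.posPart) - ∫ x, f x ∂μ.toJordanDecomposition.negPart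

def IsTransKernel {Ω : Type*} [MeasurableSpace Ω] (k : Ω → SignedMeasure Ω) : Prop :=
  ∀ A : Set Ω, MeasurableSet A → Measurable fun x => k x A

def IsBddKernel {Ω : Type*} [MeasurableSpace Ω] (k : Ω → SignedMeasure Ω) : Prop :=
  IsTransKernel k ∧ ∃ C : ℝ≥0, ∀ x, (k x).totalVariation Set.univ ≤ C

def GivenByKernel {Ω : Type*} [MeasurableSpace Ω]
    (T : SignedMeasure Ω →ₗ[ℝ] SignedMeasure Ω) (k : Ω → SignedMeasure Ω) : Prop :=
  ∀ (μ : SignedMeasure Ω) (A : Set Ω), MeasurableSet A → T μ A = sInt μ (fun x => k x A)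

def IsBdMeasurable {Ω : Type*} [MeasurableSpace Ω] (f : Ω → ℝ) : Prop :=
  Measurable f ∧ ∃ C : ℝ, ∀ x, |f x| ≤ C

instance totalVariation_isFiniteMeasure {Ω : Type*} [MeasurableSpace Ω] (μ : SignedMeasure Ω) :
    IsFiniteMeasure μ.totalVariation := by
  unfold SignedMeasure.totalVariation; infer_instance

namespace Stmt13Aux

lemma sm_apply_jordan {Ω : Type*} [MeasurableSpace Ω] (μ : SignedMeasure Ω) {A : Set Ω}
    (hA : MeasurableSet A) :
    μ A = (μ.toJordanDecomposition.posPart A).toReal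
        - (μ.toJordanDecomposition.negPart A).toReal := by
  conv_lhs => rw [← μ.toSignedMeasure_toJordanDecomposition]
  rw [JordanDecomposition.toSignedMeasure, Measure.toSignedMeasure_sub_apply hA]
  rfl

lemma abs_apply_le_tv {Ω : Type*} [MeasurableSpace Ω] (μ : SignedMeasure Ω) {A : Set Ω}
    (hA : MeasurableSet A) : |μ A| ≤ (μ.totalVariation A).toReal := by
  rw [sm_apply_jordan μ hA, SignedMeasure.totalVariation, Measure.add_apply,
    ENNReal.toReal_add (measure_ne_top _ _) (measure_ne_top _ _)]
  have h1 := ENNReal.toReal_nonneg (a := μ.toJordanDecomposition.posPart A)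
  have h2 := ENNReal.toReal_nonneg (a := μ.toJordanDecomposition.negPart A)
  rw [abs_sub_le_iff]
  constructor <;> linarith

lemma jordan_toSignedMeasure {Ω : Type*} [MeasurableSpace Ω] (ν : Measure Ω) [IsFiniteMeasure ν] :
    ν.toSignedMeasure.toJordanDecomposition = ⟨ν, 0, Measure.MutuallySingular.zero_right⟩ := by
  apply MeasureTheory.SignedMeasure.toJordanDecomposition_eq
  simp [JordanDecomposition.toSignedMeasure]

lemma summable_singleton (μ : SignedMeasure ℝ) : Summable fun x : ℝ => μ {x} := by
  have hb : ∀ s : Finset ℝ, ∑ x ∈ s, (μ.totalVariation {x}).toReal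
      ≤ (μ.totalVariation Set.univ).toReal := by
    intro s
    have h1 : ∑ x ∈ s, (μ.totalVariation {x}).toReal = (μ.totalVariation ↑s).toReal := by
      rw [← ENNReal.toReal_sum (fun _ _ => measure_ne_top _ _)]
      congr 1
      have := measure_biUnion_finset (μ := μ.totalVariation) (s := s)
        (f := fun x => ({x} : Set ℝ))
        (fun x _ y _ hxy => Set.disjoint_singleton.2 hxy)
        (fun _ _ => measurableSet_singleton _)
      rw [← this]
      congr 1
      ext y; simp
    rw [h1]
    exact ENNReal.toReal_mono (measure_ne_top _ _) (measure_mono (Set.subset_univ _))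
  have hsum : Summable fun x : ℝ => (μ.totalVariation {x}).toReal :=
    summable_of_sum_le (fun x => ENNReal.toReal_nonneg) hb
  exact hsum.of_norm_bounded (fun x => by
    rw [Real.norm_eq_abs]; exact abs_apply_le_tv μ (measurableSet_singleton x))

lemma sm_sum_singleton (μ : SignedMeasure ℝ) (s : Finset ℝ) :
    ∑ x ∈ s, μ {x} = μ (↑s : Set ℝ) := by
  classical
  induction s using Finset.induction_on with
  | empty => simp
  | insert _ _ ha ih =>
    rename_i a s
    rw [Finset.sum_insert ha, ih, Finset.coe_insert, Set.insert_eq,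
      VectorMeasure.of_union (Set.disjoint_singleton_left.2 (by simpa using ha))
        (measurableSet_singleton a) s.measurableSet]

noncomputable def phi : SignedMeasure ℝ →ₗ[ℝ] ℝ where
  toFun μ := μ Set.univ - ∑' x : ℝ, μ {x}
  map_add' μ ν := by
    simp only [VectorMeasure.add_apply]
    rw [Summable.tsum_add (summable_singleton μ) (summable_singleton ν)]
    ring
  map_smul' c μ := by
    simp only [VectorMeasure.smul_apply, smul_eq_mul, RingHom.id_apply]
    rw [tsum_mul_left]
    ring

end Stmt13Aux

namespace Stmt13Aux

lemma zero_le_apply {μ : SignedMeasure ℝ} (hμ : 0 ≤ μ) {A : Set ℝ} (hA : MeasurableSet A) :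
    0 ≤ μ A := by
  have := (VectorMeasure.le_iff.mp hμ) A hA
  simpa using this

lemma tsum_singleton_le {μ : SignedMeasure ℝ} (hμ : 0 ≤ μ) :
    ∑' x : ℝ, μ {x} ≤ μ Set.univ := by
  refine Summable.tsum_le_of_sum_le (summable_singleton μ) (fun s => ?_)
  rw [sm_sum_singleton]
  have h := VectorMeasure.of_union (v := μ) (disjoint_compl_right)
    s.measurableSet s.measurableSet.compl
  rw [Set.union_compl_self] at h
  have h2 : 0 ≤ μ (↑s : Set ℝ)ᶜ := zero_le_apply hμ s.measurableSet.compl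
  linarith

lemma phi_nonneg {μ : SignedMeasure ℝ} (hμ : 0 ≤ μ) : 0 ≤ phi μ := by
  have := tsum_singleton_le hμ
  simp only [phi, LinearMap.coe_mk, AddHom.coe_mk]
  linarith

lemma phi_le {μ : SignedMeasure ℝ} (hμ : 0 ≤ μ) : phi μ ≤ μ Set.univ := by
  have h : 0 ≤ ∑' x : ℝ, μ {x} :=
    tsum_nonneg (fun x => zero_le_apply hμ (measurableSet_singleton x))
  simp only [phi, LinearMap.coe_mk, AddHom.coe_mk]
  linarith

noncomputable def ν₀ : Measure ℝ := volume.restrict (Set.Icc 0 1)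

lemma ν₀_univ : ν₀ Set.univ = 1 := by
  rw [ν₀, Measure.restrict_apply_univ, Real.volume_Icc]
  norm_num

instance : IsFiniteMeasure ν₀ := ⟨by rw [ν₀_univ]; exact ENNReal.one_lt_top⟩

noncomputable def m : SignedMeasure ℝ := ν₀.toSignedMeasure

lemma m_nonneg : 0 ≤ m := Measure.zero_le_toSignedMeasure ν₀

lemma m_univ : m Set.univ = 1 := by
  rw [m, Measure.toSignedMeasure_apply_measurable MeasurableSet.univ, measureReal_def, ν₀_univ]
  simp

lemma ν₀_singleton (x : ℝ) : ν₀ {x} = 0 := by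
  refine le_antisymm (le_trans (Measure.restrict_le_self _) ?_) zero_le
  simp

lemma m_singleton (x : ℝ) : m {x} = 0 := by
  rw [m, Measure.toSignedMeasure_apply_measurable (measurableSet_singleton x), measureReal_def, ν₀_singleton]
  simp

lemma phi_m : phi m = 1 := by
  simp only [phi, LinearMap.coe_mk, AddHom.coe_mk, m_univ, m_singleton, tsum_zero]
  norm_num

noncomputable def evalUniv : SignedMeasure ℝ →ₗ[ℝ] ℝ where
  toFun μ := μ Set.univ
  map_add' μ ν := by simp [VectorMeasure.add_apply]
  map_smul' c μ := by simp [VectorMeasure.smul_apply]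

lemma sInt_measure (ν : Measure ℝ) [IsFiniteMeasure ν] (f : ℝ → ℝ) :
    sInt ν.toSignedMeasure f = ∫ x, f x ∂ν := by
  unfold sInt
  rw [jordan_toSignedMeasure]
  simp

lemma sInt_const (μ : SignedMeasure ℝ) (c : ℝ) :
    sInt μ (fun _ => c) = μ Set.univ * c := by
  unfold sInt
  rw [integral_const, integral_const, sm_apply_jordan μ MeasurableSet.univ]
  simp only [smul_eq_mul, measureReal_def]
  ring

lemma tv_m_univ : m.totalVariation Set.univ ≤ 1 := by
  rw [m, SignedMeasure.totalVariation, jordan_toSignedMeasure]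
  simp [ν₀_univ]

end Stmt13Aux

theorem stmt13 :
    ∃ T S : SignedMeasure ℝ →ₗ[ℝ] SignedMeasure ℝ,
      (∃ (φ : SignedMeasure ℝ →ₗ[ℝ] ℝ) (m : SignedMeasure ℝ),
        0 ≤ m ∧ ∀ ν : SignedMeasure ℝ, T ν = φ ν • m) ∧
      (∀ μ : SignedMeasure ℝ, 0 ≤ μ → 0 ≤ T μ ∧ T μ ≤ S μ) ∧
      (∃ k : ℝ → SignedMeasure ℝ, IsBddKernel k ∧ GivenByKernel S k) ∧
      ¬ ∃ k : ℝ → SignedMeasure ℝ, IsBddKernel k ∧ GivenByKernel T k := by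
  classical
  refine ⟨Stmt13Aux.phi.smulRight Stmt13Aux.m, Stmt13Aux.evalUniv.smulRight Stmt13Aux.m,
    ⟨Stmt13Aux.phi, Stmt13Aux.m, Stmt13Aux.m_nonneg, fun ν => rfl⟩, ?_, ?_, ?_⟩
  · intro μ hμ
    constructor
    · intro A hA
      simp only [LinearMap.smulRight_apply, VectorMeasure.smul_apply, smul_eq_mul,
        VectorMeasure.coe_zero, Pi.zero_apply]
      exact mul_nonneg (Stmt13Aux.phi_nonneg hμ) (Stmt13Aux.zero_le_apply Stmt13Aux.m_nonneg hA)
    · intro A hA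
      simp only [LinearMap.smulRight_apply, VectorMeasure.smul_apply, smul_eq_mul]
      exact mul_le_mul_of_nonneg_right (Stmt13Aux.phi_le hμ)
        (Stmt13Aux.zero_le_apply Stmt13Aux.m_nonneg hA)
  · refine ⟨fun _ => Stmt13Aux.m, ⟨fun A hA => measurable_const, ⟨1, fun x => ?_⟩⟩, ?_⟩
    · simpa using Stmt13Aux.tv_m_univ
    · intro ν A hA
      rw [show (fun x : ℝ => Stmt13Aux.m A) = fun _ : ℝ => Stmt13Aux.m A from rfl,
        Stmt13Aux.sInt_const]
      simp only [LinearMap.smulRight_apply, VectorMeasure.smul_apply, smul_eq_mul]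
      rfl
  · rintro ⟨k, -, hk⟩
    have hker : ∀ (x : ℝ) (A : Set ℝ), MeasurableSet A → k x A = 0 := by
      intro x A hA
      have h1 := hk (Measure.dirac x).toSignedMeasure A hA
      have hphi : Stmt13Aux.phi (Measure.dirac x).toSignedMeasure = 0 := by
        have huniv : (Measure.dirac x).toSignedMeasure Set.univ = 1 := by
          rw [Measure.toSignedMeasure_apply_measurable MeasurableSet.univ]
          simp
        have htsum : ∑' y : ℝ, (Measure.dirac x).toSignedMeasure {y} = 1 := by
          rw [tsum_eq_single x]
          · rw [Measure.toSignedMeasure_apply_measurable (measurableSet_singleton x)]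
            simp [measureReal_def]
          · intro y hy
            rw [Measure.toSignedMeasure_apply_measurable (measurableSet_singleton y),
              measureReal_def, Measure.dirac_apply' _ (measurableSet_singleton y),
              Set.indicator_of_notMem (by simpa using hy.symm)]
            simp
        simp only [Stmt13Aux.phi, LinearMap.coe_mk, AddHom.coe_mk, huniv, htsum, sub_self]
      rw [Stmt13Aux.sInt_measure, integral_dirac] at h1
      simp only [LinearMap.smulRight_apply, hphi, zero_smul, VectorMeasure.coe_zero,
        Pi.zero_apply] at h1
      exact h1.symm
    have h2 := hk Stmt13Aux.m Set.univ MeasurableSet.univ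
    have h3 : (fun y : ℝ => k y Set.univ) = fun _ : ℝ => (0:ℝ) :=
      funext fun y => hker y _ MeasurableSet.univ
    rw [h3, Stmt13Aux.sInt_const, mul_zero] at h2
    simp only [LinearMap.smulRight_apply, VectorMeasure.smul_apply, Stmt13Aux.phi_m,
      Stmt13Aux.m_univ, smul_eq_mul, one_mul] at h2
    exact one_ne_zero h2
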